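/- If κ is a singular cardinal, then the infinitary relevant language L_{κω}→ is exactly as expressive as L_{κ⁺ω}→: every formula of L_{κ⁺ω}→ is equivalent to a formula of L_{κω}→, where two formulas are equivalent if they are satisfied at exactly the same worlds of all Routley–Meyer models. -/

import Mathlib

universe u

/-- Formulas of the infinitary relevant language with absurdity `L_{∞ω}→` over
propositional variables `P`.  Conjunctions and disjunctions are indexed by
arbitrary (set-sized) index types. -/
inductive RelForm (P : Type u) : Type (u + 1)
  | atom : P → RelForm P
  | bot : RelForm P
  | neg : RelForm P → RelForm P
  | conj : (ι : Type u) → (ι → RelForm P) → RelForm P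
  | disj : (ι : Type u) → (ι → RelForm P) → RelForm P
  | imp : RelForm P → RelForm P → RelForm P

/-- A Routley–Meyer model. -/
structure RMModel (P : Type u) : Type (u + 1) where
  W : Type u
  nonempty : Nonempty W
  R : W → W → W → Prop
  star : W → W
  V : P → W → Prop

/-- Routley–Meyer satisfaction. -/
def RMModel.sat {P : Type u} (M : RMModel P) : M.W → RelForm P → Prop
  | w, .atom p => M.V p w
  | _, .bot => False
  | w, .neg φ => ¬ M.sat (M.star w) φ
  | w, .conj _ f => ∀ i, M.sat w (f i)
  | w, .disj _ f => ∃ i, M.sat w (f i)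
  | w, .imp φ ψ => ∀ a b, M.R w a b → M.sat a φ → M.sat b ψ

/-- The degree of an infinitary relevant formula. -/
noncomputable def RelForm.deg {P : Type u} : RelForm P → Ordinal.{u}
  | .atom _ => 0
  | .bot => 0
  | .neg φ => φ.deg
  | .conj _ f => ⨆ i, (f i).deg
  | .disj _ f => ⨆ i, (f i).deg
  | .imp φ ψ => max φ.deg ψ.deg + 1

/-- A formula lies in the fragment `L_{κω}→` : all its conjunctions and
disjunctions have index sets of cardinality `< κ`. -/
def RelForm.indexBound {P : Type u} (κ : Cardinal.{u}) : RelForm P → Prop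
  | .atom _ => True
  | .bot => True
  | .neg φ => φ.indexBound κ
  | .conj ι f => Cardinal.mk ι < κ ∧ ∀ i, (f i).indexBound κ
  | .disj ι f => Cardinal.mk ι < κ ∧ ∀ i, (f i).indexBound κ
  | .imp φ ψ => φ.indexBound κ ∧ ψ.indexBound κ

/-- The propositional variables occurring in a relevant formula. -/
def RelForm.props {P : Type u} : RelForm P → Set P
  | .atom p => {p}
  | .bot => ∅
  | .neg φ => φ.props
  | .conj _ f => ⋃ i, (f i).props
  | .disj _ f => ⋃ i, (f i).props
  | .imp φ ψ => φ.props ∪ ψ.props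

/-- The B-model frame/valuation conditions, for the pointed model `(M, T)`. -/
def IsBModel {P : Type u} (M : RMModel P) (T : M.W) : Prop :=
  (∀ x, M.R T x x) ∧
  (∀ x v y z, M.R T x v → M.R v y z → M.R x y z) ∧
  (∀ x, M.star (M.star x) = x) ∧
  (∀ x y, M.R T x y → M.R T (M.star y) (M.star x)) ∧
  (∀ p x y, M.V p x → M.R T x y → M.V p y)

/-- The RM-model conditions, for the pointed model `(M, T)`. -/
def IsRMModel {P : Type u} (M : RMModel P) (T : M.W) : Prop :=
  IsBModel M T ∧
  (∀ z x y, M.R z x y → M.R z (M.star y) (M.star x)) ∧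
  (∀ x y z v, (∃ u, M.R x y u ∧ M.R u z v) → (∃ u, M.R x u v ∧ M.R y z u)) ∧
  (∀ x, M.R x x x) ∧
  (∀ x y z, M.R x y z → M.R y x z) ∧
  (∀ x y z, M.R x y z → M.R T x z ∨ M.R T y z)

/-- A pointed model `(M, T)` is inconsistent if `p ∧ ~p` holds at `T`
for some propositional variable `p`. -/
def Inconsistent {P : Type u} (M : RMModel P) (T : M.W) : Prop :=
  ∃ p : P, M.sat T (.atom p) ∧ M.sat T (.neg (.atom p))

/-- A relevant directed bisimulation between `M₁` and `M₂` for the set `Q` of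
propositional variables. -/
structure IsRelDirectedBisim {P : Type u} (Q : Set P) (M₁ M₂ : RMModel P)
    (Z₁ : M₁.W → M₂.W → Prop) (Z₂ : M₂.W → M₁.W → Prop) : Prop where
  nonempty₁ : ∃ x y, Z₁ x y
  nonempty₂ : ∃ x y, Z₂ x y
  star₁ : ∀ x y, Z₁ x y → Z₂ (M₂.star y) (M₁.star x)
  star₂ : ∀ x y, Z₂ x y → Z₁ (M₁.star y) (M₂.star x)
  back₁ : ∀ x y b c, Z₁ x y → M₂.R y b c →
    ∃ b' c', M₁.R x b' c' ∧ Z₂ b b' ∧ Z₁ c' c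
  back₂ : ∀ x y b c, Z₂ x y → M₁.R y b c →
    ∃ b' c', M₂.R x b' c' ∧ Z₁ b b' ∧ Z₂ c' c
  atom₁ : ∀ x y, Z₁ x y → ∀ p ∈ Q, M₁.V p x → M₂.V p y
  atom₂ : ∀ x y, Z₂ x y → ∀ p ∈ Q, M₂.V p x → M₁.V p y

/-- A relevant directed α-bisimulation between `M₁` and `M₂` (for all
propositional variables): a system of pairs of nonempty relations
`⟨Z₁ β, Z₂ β⟩` for `β ≤ α`, decreasing in `β`. -/
structure IsRelDirectedAlphaBisim {P : Type u} (M₁ M₂ : RMModel P) (α : Ordinal.{u})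
    (Z₁ : Ordinal.{u} → M₁.W → M₂.W → Prop)
    (Z₂ : Ordinal.{u} → M₂.W → M₁.W → Prop) : Prop where
  nonempty₁ : ∀ β ≤ α, ∃ x y, Z₁ β x y
  nonempty₂ : ∀ β ≤ α, ∃ x y, Z₂ β x y
  anti₁ : ∀ β γ, β ≤ γ → γ ≤ α → ∀ x y, Z₁ γ x y → Z₁ β x y
  anti₂ : ∀ β γ, β ≤ γ → γ ≤ α → ∀ x y, Z₂ γ x y → Z₂ β x y
  star₁ : ∀ γ ≤ α, ∀ x y, Z₁ γ x y → Z₂ γ (M₂.star y) (M₁.star x)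
  star₂ : ∀ γ ≤ α, ∀ x y, Z₂ γ x y → Z₁ γ (M₁.star y) (M₂.star x)
  back₁ : ∀ β < α, ∀ x y, Z₁ (Order.succ β) x y → ∀ b c, M₂.R y b c →
    ∃ b' c', M₁.R x b' c' ∧ Z₂ β b b' ∧ Z₁ β c' c
  back₂ : ∀ β < α, ∀ x y, Z₂ (Order.succ β) x y → ∀ b c, M₁.R y b c →
    ∃ b' c', M₂.R x b' c' ∧ Z₁ β b b' ∧ Z₂ β c' c
  atom₁ : ∀ γ ≤ α, ∀ x y, Z₁ γ x y → ∀ p, M₁.V p x → M₂.V p y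
  atom₂ : ∀ γ ≤ α, ∀ x y, Z₂ γ x y → ∀ p, M₂.V p x → M₁.V p y

/-! ### The correspondence language `L_{∞ω}^{corr}` -/

/-- Terms of the correspondence language: variables and the Routley star. -/
inductive CTerm : Type
  | var : ℕ → CTerm
  | star : CTerm → CTerm

/-- Formulas of the classical infinitary correspondence language, over the
signature with the ternary relation `R`, the unary function `*` and one unary
predicate for each element of `P`. -/
inductive CForm (P : Type u) : Type (u + 1)
  | rel : CTerm → CTerm → CTerm → CForm P
  | prop : P → CTerm → CForm P
  | not : CForm P → CForm P
  | and : CForm P → CForm P → CForm P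
  | imp : CForm P → CForm P → CForm P
  | conj : (ι : Type u) → (ι → CForm P) → CForm P
  | disj : (ι : Type u) → (ι → CForm P) → CForm P
  | all : ℕ → CForm P → CForm P
  | ex : ℕ → CForm P → CForm P

/-- Evaluation of terms in a Routley–Meyer model, read as a classical
structure. -/
def CTerm.eval {P : Type u} (M : RMModel P) (v : ℕ → M.W) : CTerm → M.W
  | .var n => v n
  | .star t => M.star (t.eval M v)

/-- Classical (Tarskian) satisfaction for the correspondence language. -/
def CForm.Sat {P : Type u} (M : RMModel P) : (ℕ → M.W) → CForm P → Prop
  | v, .rel t₁ t₂ t₃ => M.R (t₁.eval M v) (t₂.eval M v) (t₃.eval M v)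
  | v, .prop p t => M.V p (t.eval M v)
  | v, .not φ => ¬ CForm.Sat M v φ
  | v, .and φ ψ => CForm.Sat M v φ ∧ CForm.Sat M v ψ
  | v, .imp φ ψ => CForm.Sat M v φ → CForm.Sat M v ψ
  | v, .conj _ f => ∀ i, CForm.Sat M v (f i)
  | v, .disj _ f => ∃ i, CForm.Sat M v (f i)
  | v, .all n φ => ∀ a : M.W, CForm.Sat M (Function.update v n a) φ
  | v, .ex n φ => ∃ a : M.W, CForm.Sat M (Function.update v n a) φ

/-- The predicates (corresponding to propositional variables) occurring in a
correspondence-language formula. -/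
def CForm.props {P : Type u} : CForm P → Set P
  | .rel _ _ _ => ∅
  | .prop p _ => {p}
  | .not φ => φ.props
  | .and φ ψ => φ.props ∪ ψ.props
  | .imp φ ψ => φ.props ∪ ψ.props
  | .conj _ f => ⋃ i, (f i).props
  | .disj _ f => ⋃ i, (f i).props
  | .all _ φ => φ.props
  | .ex _ φ => φ.props

/-- Auxiliary standard translation `T_x(φ)^{t/x}`: the parameter `n` is a
supply of fresh variables (all variables of `t` are `< n`). -/
def stAux {P : Type u} : ℕ → CTerm → RelForm P → CForm P
  | _, t, .bot => .and (.not (.rel t t t)) (.rel t t t)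
  | _, t, .atom p => .prop p t
  | n, t, .neg φ => .not (stAux n (.star t) φ)
  | n, t, .conj ι f => .conj ι fun i => stAux n t (f i)
  | n, t, .disj ι f => .disj ι fun i => stAux n t (f i)
  | n, t, .imp φ ψ =>
      .all n (.all (n + 1)
        (.imp (.and (.rel t (.var n) (.var (n + 1))) (stAux (n + 2) (.var n) φ))
          (stAux (n + 2) (.var (n + 1)) ψ)))

/-- The standard translation `T_x(φ)` with free variable `x = var 0`. -/
def stT {P : Type u} (φ : RelForm P) : CForm P := stAux 1 (.var 0) φ

/-- Satisfaction of a correspondence-language formula with one free variable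
`x = var 0` at the element `w`. -/
def CForm.SatAt {P : Type u} (φ : CForm P) (M : RMModel P) (w : M.W) : Prop :=
  CForm.Sat M (fun _ => w) φ

/-- Expansion of a model by interpretations of extra predicates. -/
def RMModel.expand {P Q : Type u} (M : RMModel P) (I : Q → M.W → Prop) :
    RMModel (P ⊕ Q) :=
  { W := M.W, nonempty := M.nonempty, R := M.R, star := M.star,
    V := Sum.elim M.V I }

/-- A `Σ¹₁` formula over the correspondence language: second-order existential
quantification over a family of extra predicates, in front of a formula. -/
structure Sigma11Form (P : Type u) : Type (u + 1) where
  preds : Type u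
  matrix : CForm (P ⊕ preds)

/-- A `Π¹₁` formula over the correspondence language. -/
structure Pi11Form (P : Type u) : Type (u + 1) where
  preds : Type u
  matrix : CForm (P ⊕ preds)

/-- Satisfaction of a `Σ¹₁` formula (one free variable) at a point. -/
def Sigma11Form.SatAt {P : Type u} (φ : Sigma11Form P) (M : RMModel P)
    (w : M.W) : Prop :=
  ∃ I : φ.preds → M.W → Prop, CForm.Sat (M.expand I) (fun _ => w) φ.matrix

/-- Satisfaction of a `Π¹₁` formula (one free variable) at a point. -/
def Pi11Form.SatAt {P : Type u} (φ : Pi11Form P) (M : RMModel P)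
    (w : M.W) : Prop :=
  ∀ I : φ.preds → M.W → Prop, CForm.Sat (M.expand I) (fun _ => w) φ.matrix

/-- Propositional-variable predicates occurring in a `Σ¹₁` formula. -/
def Sigma11Form.props {P : Type u} (φ : Sigma11Form P) : Set P :=
  {p : P | Sum.inl p ∈ φ.matrix.props}

/-- Propositional-variable predicates occurring in a `Π¹₁` formula. -/
def Pi11Form.props {P : Type u} (φ : Pi11Form P) : Set P :=
  {p : P | Sum.inl p ∈ φ.matrix.props}

/-- `A` implies `B` along relevant directed bisimulations for `Q` over the
class `K`. -/
def ImpliesAlong {P : Type u} (K : RMModel P → Prop) (Q : Set P)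
    (A B : (M : RMModel P) → M.W → Prop) : Prop :=
  ∀ M₁ M₂ : RMModel P, K M₁ → K M₂ →
    ∀ (Z₁ : M₁.W → M₂.W → Prop) (Z₂ : M₂.W → M₁.W → Prop),
      IsRelDirectedBisim Q M₁ M₂ Z₁ Z₂ →
        (∀ a b, Z₁ a b → A M₁ a → B M₂ b) ∧ (∀ a b, Z₂ a b → A M₂ a → B M₁ b)

/-- A Hilbert-style formal system for `L_{κ⁺ω}→`: a set of axioms, and a set of
rules each with fewer than `κ⁺` premises. -/
structure HilbertSystem (P : Type u) (κ : Cardinal.{u}) : Type (u + 1) where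
  Axioms : Set (RelForm P)
  Rules : Set ((ι : Type u) × (ι → RelForm P) × RelForm P)
  rules_small : ∀ r ∈ Rules, Cardinal.mk r.1 < Order.succ κ

/-- `Γ ⊢_H φ`: there is a sequence of formulas of length `< κ⁺`, each member of
which is an axiom, a member of `Γ`, or follows from previous members by a rule,
with `φ` occurring (as its last member). -/
def HilbertSystem.Proves {P : Type u} {κ : Cardinal.{u}} (H : HilbertSystem P κ)
    (Γ : Set (RelForm P)) (φ : RelForm P) : Prop :=
  ∃ (δ : Ordinal.{u}) (s : ∀ γ : Ordinal.{u}, γ < δ → RelForm P),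
    δ.card < Order.succ κ ∧
    (∀ γ (hγ : γ < δ),
      s γ hγ ∈ H.Axioms ∨ s γ hγ ∈ Γ ∨
      ∃ r ∈ H.Rules, r.2.2 = s γ hγ ∧
        ∀ i : r.1, ∃ γ', ∃ hlt : γ' < γ, s γ' (hlt.trans hγ) = r.2.1 i) ∧
    ∃ γ, ∃ hγ : γ < δ, s γ hγ = φ

/-- The formula `⋁_{p ∈ PROP} (p ∧ ~p)` expressing inconsistency. -/
def inconsistencyFormula (P : Type u) : RelForm P :=
  .disj P fun p =>
    .conj (ULift.{u} Bool) fun b => bif b.down then .atom p else .neg (.atom p)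

/-- Splitting an index set of size `≤ κ` (κ singular) into `< κ` many pieces
each of size `< κ`. -/
lemma split_index {κ : Cardinal.{u}} (hκ : Cardinal.aleph0.{u} ≤ κ)
    (hsing : κ.ord.cof < κ) (ι : Type u) (hι : Cardinal.mk ι ≤ κ) :
    ∃ (J : Type u) (K : J → Type u) (g : ∀ j, K j → ι),
      Cardinal.mk J < κ ∧ (∀ j, Cardinal.mk (K j) < κ) ∧
      ∀ i, ∃ j k, g j k = i := by
  obtain ⟨e⟩ : Nonempty (ι ↪ κ.ord.ToType) := by
    rw [← Cardinal.le_def, Cardinal.mk_toType, Cardinal.card_ord]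
    exact hι
  obtain ⟨S, hS, hScard⟩ := Order.exists_cof_eq κ.ord.ToType
  rw [Ordinal.cof_toType] at hScard
  refine ⟨S, fun j => {i : ι // e i ≤ j.1}, fun j k => k.1, ?_, ?_, ?_⟩
  · rw [hScard]; exact hsing
  · intro j
    have h1 : Cardinal.mk {i : ι // e i ≤ j.1} ≤ Cardinal.mk (Set.Iic j.1) :=
      ⟨⟨fun k => ⟨e k.1, k.2⟩, fun a b hab => by
        apply Subtype.ext
        exact e.injective (congrArg Subtype.val hab)⟩⟩
    have h2 : Cardinal.mk (Set.Iic j.1) ≤ Cardinal.mk (Set.Iio j.1) + 1 := by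
      rw [← Set.Iio_insert]
      simpa using Cardinal.mk_insert_le (s := Set.Iio j.1) (a := j.1)
    have h3 : Cardinal.mk (Set.Iio j.1) + 1 < κ :=
      Cardinal.add_lt_of_lt hκ (Cardinal.mk_Iio_ord_toType j.1)
        (lt_of_lt_of_le Cardinal.one_lt_aleph0 hκ)
    exact lt_of_le_of_lt (le_trans h1 h2) h3
  · intro i
    obtain ⟨y, hyS, hy⟩ := hS (e i)
    exact ⟨⟨y, hyS⟩, ⟨i, hy⟩, rfl⟩

/-- If `κ` is a singular cardinal then `L_{κω}→` is exactly
as expressive as `L_{κ⁺ω}→`: every formula of `L_{κ⁺ω}→` is equivalent (over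
all Routley–Meyer models) to a formula of `L_{κω}→`. -/
theorem singular_collapse {P : Type u} (κ : Cardinal.{u})
    (hκ : Cardinal.aleph0.{u} ≤ κ) (hsing : κ.ord.cof < κ) :
    ∀ φ : RelForm P, φ.indexBound (Order.succ κ) →
      ∃ ψ : RelForm P, ψ.indexBound κ ∧
        ∀ (M : RMModel P) (w : M.W), M.sat w φ ↔ M.sat w ψ := by
  intro φ
  induction φ with
  | atom p => exact fun _ => ⟨.atom p, trivial, fun M w => Iff.rfl⟩
  | bot => exact fun _ => ⟨.bot, trivial, fun M w => Iff.rfl⟩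
  | neg φ ih => 
    intro h
    obtain ⟨ψ, hb, he⟩ := ih h
    exact ⟨.neg ψ, hb, fun M w => not_congr (he M (M.star w))⟩
  | imp φ₁ φ₂ ih₁ ih₂ =>
    intro h
    obtain ⟨ψ₁, hb₁, he₁⟩ := ih₁ h.1
    obtain ⟨ψ₂, hb₂, he₂⟩ := ih₂ h.2
    refine ⟨.imp ψ₁ ψ₂, ⟨hb₁, hb₂⟩, fun M w => ?_⟩
    show (∀ a b, M.R w a b → M.sat a φ₁ → M.sat b φ₂) ↔
      (∀ a b, M.R w a b → M.sat a ψ₁ → M.sat b ψ₂)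
    constructor
    · intro H a b hr ha
      exact (he₂ M b).mp (H a b hr ((he₁ M a).mpr ha))
    · intro H a b hr ha
      exact (he₂ M b).mpr (H a b hr ((he₁ M a).mp ha))
  | conj ι f ih =>
    intro h
    choose ψ hb he using fun i => ih i (h.2 i)
    obtain ⟨J, K, g, hJ, hK, hcov⟩ :=
      split_index hκ hsing ι (Order.lt_succ_iff.mp h.1)
    refine ⟨.conj J fun j => .conj (K j) fun k => ψ (g j k),
      ⟨hJ, fun j => ⟨hK j, fun k => hb _⟩⟩, fun M w => ?_⟩
    show (∀ i, M.sat w (f i)) ↔ ∀ j, ∀ k, M.sat w (ψ (g j k))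
    constructor
    · intro H j k; exact (he _ M w).mp (H _)
    · intro H i
      obtain ⟨j, k, hk⟩ := hcov i
      rw [he i M w, ← hk]
      exact H j k
  | disj ι f ih =>
    intro h
    choose ψ hb he using fun i => ih i (h.2 i)
    obtain ⟨J, K, g, hJ, hK, hcov⟩ :=
      split_index hκ hsing ι (Order.lt_succ_iff.mp h.1)
    refine ⟨.disj J fun j => .disj (K j) fun k => ψ (g j k),
      ⟨hJ, fun j => ⟨hK j, fun k => hb _⟩⟩, fun M w => ?_⟩
    show (∃ i, M.sat w (f i)) ↔ ∃ j, ∃ k, M.sat w (ψ (g j k))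
    constructor
    · rintro ⟨i, hi⟩
      obtain ⟨j, k, hk⟩ := hcov i
      exact ⟨j, k, by rw [hk]; exact (he i M w).mp hi⟩
    · rintro ⟨j, k, hk⟩
      exact ⟨g j k, (he _ M w).mpr hk⟩
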